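/- Let H = (V,E) be a connected hypergraph and σ ∈ ℝ^E_{>0}. Then the weighted 1-modulus of the multi-tree family Ω(H) equals the weighted strength: Mod_{1,σ}(Ω(H)) = S_σ(H) = min{ σ(δ(𝒫))/(|𝒫|-1) : 𝒫 a partition of V, |𝒫| ≥ 2 }. -/

import Mathlib

open Finset
open scoped Classical

noncomputable section

variable {V E : Type*}

/-- The set of hyperedges meeting at least two parts of the partition `P` (the cut `δ(P)`). -/
def hcut [Fintype V] [DecidableEq V] [Fintype E] (edge : E → Finset V)
    (P : Finpartition (univ : Finset V)) : Finset E :=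
  univ.filter fun e => ∃ p ∈ P.parts, ∃ q ∈ P.parts,
    p ≠ q ∧ (edge e ∩ p).Nonempty ∧ (edge e ∩ q).Nonempty

/-- The hyperedges entirely contained in the vertex set `X`. -/
def edgesIn [DecidableEq V] [Fintype E] (edge : E → Finset V) (X : Finset V) : Finset E :=
  univ.filter fun e => edge e ⊆ X

/-- The strength `S(H)`. -/
def strength [Fintype V] [DecidableEq V] [Fintype E] (edge : E → Finset V) : ℝ :=
  sInf { r : ℝ | ∃ P : Finpartition (univ : Finset V), 2 ≤ P.parts.card ∧
    r = ((hcut edge P).card : ℝ) / ((P.parts.card : ℝ) - 1) }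

/-- The weighted strength `S_σ(H)`. -/
def strengthW [Fintype V] [DecidableEq V] [Fintype E] (σ : E → ℝ) (edge : E → Finset V) : ℝ :=
  sInf { r : ℝ | ∃ P : Finpartition (univ : Finset V), 2 ≤ P.parts.card ∧
    r = (∑ e ∈ hcut edge P, σ e) / ((P.parts.card : ℝ) - 1) }

/-- The fractional arboricity `D(H)`. -/
def arboricity [Fintype V] [DecidableEq V] [Fintype E] (edge : E → Finset V) : ℝ :=
  sSup { r : ℝ | ∃ X : Finset V, 2 ≤ X.card ∧
    r = ((edgesIn edge X).card : ℝ) / ((X.card : ℝ) - 1) }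

/-- Connectivity of the subhypergraph induced by the vertex set `W`
(only hyperedges contained in `W` are used). -/
def ConnectedIn (edge : E → Finset V) (W : Finset V) : Prop :=
  ∀ X ⊆ W, X.Nonempty → X ≠ W →
    ∃ e, edge e ⊆ W ∧ (edge e ∩ X).Nonempty ∧ ((edge e ∩ W) \ X).Nonempty

/-- Connectivity of the trace hypergraph on the vertex set `W`
(each hyperedge is replaced by its intersection with `W`, as in vertex deletion). -/
def ConnectedOn (edge : E → Finset V) (W : Finset V) : Prop :=
  ∀ X ⊆ W, X.Nonempty → X ≠ W →
    ∃ e, ((edge e ∩ W) ∩ X).Nonempty ∧ ((edge e ∩ W) \ X).Nonempty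

/-- A hypergraph is connected if every nonempty proper vertex subset is crossed by a hyperedge. -/
def HConnected [Fintype V] (edge : E → Finset V) : Prop :=
  ConnectedIn edge univ

/-- `H` is partition-connected if `|δ(P)| ≥ |P| - 1` for every partition `P` of `V`. -/
def PartitionConnected [Fintype V] [DecidableEq V] [Fintype E] (edge : E → Finset V) : Prop :=
  ∀ P : Finpartition (univ : Finset V), P.parts.card - 1 ≤ (hcut edge P).card

/-- A partition is feasible if each part induces a connected subhypergraph. -/
def Feasible [Fintype V] [DecidableEq V] (edge : E → Finset V) (P : Finpartition (univ : Finset V)) : Prop :=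
  ∀ p ∈ P.parts, ConnectedIn edge p

/-- The edges of the shrunk hypergraph `H_P`: vertices are the parts of `P`, and a hyperedge
becomes the set of parts it meets. -/
def shrunkEdge [Fintype V] [DecidableEq V] (edge : E → Finset V)
    (P : Finpartition (univ : Finset V)) (e : E) : Finset {p : Finset V // p ∈ P.parts} :=
  univ.filter fun p => (edge e ∩ p.1).Nonempty

/-- The shrunk hypergraph `H_P` is vertex-biconnected: it is connected and no single
vertex deletion disconnects it. -/
def ShrunkBiconnected [Fintype V] [DecidableEq V] [Fintype E] (edge : E → Finset V)
    (P : Finpartition (univ : Finset V)) : Prop :=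
  ConnectedIn (shrunkEdge edge P) univ ∧
  ∀ p : {p : Finset V // p ∈ P.parts}, ConnectedOn (shrunkEdge edge P) (univ \ {p})

/-- `F` is a hypertree: a hyperforest of size `|V| - 1`. -/
def IsHypertree [Fintype V] [DecidableEq V] (edge : E → Finset V) (F : Finset E) : Prop :=
  F.card = Fintype.card V - 1 ∧
  ∀ X : Finset V, X.Nonempty → (F.filter fun e => edge e ⊆ X).card ≤ X.card - 1

/-- `m` is the multiplicity vector of a multiset of hyperedges forming a hypertree on `V`. -/
def IsMultiTree [Fintype V] [DecidableEq V] [Fintype E] (edge : E → Finset V) (m : E → ℕ) : Prop :=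
  (∑ e, m e) = Fintype.card V - 1 ∧
  ∀ X : Finset V, X.Nonempty → (∑ e ∈ edgesIn edge X, m e) ≤ X.card - 1

/-- The multi-tree family `Ω(H)` as a set of usage vectors in `ℝ^E`. -/
def OmegaSet [Fintype V] [DecidableEq V] [Fintype E] (edge : E → Finset V) : Set (E → ℝ) :=
  { x | ∃ m : E → ℕ, IsMultiTree edge m ∧ x = fun e => (m e : ℝ) }

/-- The hypertree family `Γ(H)` as a set of (indicator) usage vectors in `ℝ^E`. -/
def GammaSet [Fintype V] [DecidableEq V] [Fintype E] (edge : E → Finset V) : Set (E → ℝ) :=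
  { x | ∃ F : Finset E, IsHypertree edge F ∧ x = fun e => if e ∈ F then (1 : ℝ) else 0 }

/-- The admissible set of a family of usage vectors. -/
def AdmSet [Fintype E] (G : Set (E → ℝ)) : Set (E → ℝ) :=
  { ρ | (∀ e, 0 ≤ ρ e) ∧ ∀ x ∈ G, 1 ≤ ∑ e, x e * ρ e }

/-- The weighted 1-modulus of a family of usage vectors. -/
def Mod1 [Fintype E] (σ : E → ℝ) (G : Set (E → ℝ)) : ℝ :=
  sInf { t : ℝ | ∃ ρ ∈ AdmSet G, t = ∑ e, σ e * ρ e }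

/-- `w` is an extreme point of `S`: it lies in `S` and is not the midpoint of two
distinct points of `S`. -/
def IsExtremePt [Fintype E] (S : Set (E → ℝ)) (w : E → ℝ) : Prop :=
  w ∈ S ∧ ∀ y ∈ S, ∀ z ∈ S, (∀ e, w e = (y e + z e) / 2) → y = z

/-- The rank function of the hypergraphic matroid `M(H)` (Frank et al.):
`r(F) = min { |V| - |P| + |δ_F(P)| }` over partitions `P` of `V`. -/
def hrank [Fintype V] [DecidableEq V] [Fintype E] [DecidableEq E]
    (edge : E → Finset V) (F : Finset E) : ℕ :=
  sInf { n : ℕ | ∃ P : Finpartition (univ : Finset V),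
    n = Fintype.card V - P.parts.card + (hcut edge P ∩ F).card }

/-- The (unweighted) strength of the hypergraphic matroid `M(H)`. -/
def mstrength [Fintype V] [DecidableEq V] [Fintype E] [DecidableEq E]
    (edge : E → Finset V) : ℝ :=
  sInf { r : ℝ | ∃ X : Finset E, hrank edge (univ \ X) < hrank edge univ ∧
    r = (X.card : ℝ) / ((hrank edge univ : ℝ) - (hrank edge (univ \ X) : ℝ)) }

/-- The fractional arboricity of the hypergraphic matroid `M(H)`. -/
def marboricity [Fintype V] [DecidableEq V] [Fintype E] [DecidableEq E]
    (edge : E → Finset V) : ℝ :=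
  sSup { r : ℝ | ∃ X : Finset E, 0 < hrank edge X ∧ r = (X.card : ℝ) / (hrank edge X : ℝ) }

end

section Aux

variable {V E : Type*} [Fintype V] [DecidableEq V] [Fintype E]

lemma multitree_zero (edge : E → Finset V) (h : Fintype.card V ≤ 1) :
    IsMultiTree edge (fun _ => 0) := by
  constructor
  · simp only [Finset.sum_const_zero]
    omega
  · intro X _
    simp

lemma multitree_support (edge : E → Finset V) {m : E → ℕ} (hm : IsMultiTree edge m)
    (hV : Nonempty V) {e : E} (h : m e ≠ 0) : 2 ≤ (edge e).card := by
  by_contra hc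
  push_neg at hc
  obtain ⟨v⟩ := hV
  set X : Finset V := if hne : (edge e).Nonempty then edge e else {v} with hX
  have hXne : X.Nonempty := by
    by_cases hne : (edge e).Nonempty <;> simp [hX, hne]
  have hsub : edge e ⊆ X := by
    by_cases hne : (edge e).Nonempty
    · simp [hX, hne]
    · simp only [Finset.not_nonempty_iff_eq_empty] at hne
      simp [hX, hne]
  have hXcard : X.card ≤ 1 := by
    by_cases hne : (edge e).Nonempty
    · simpa [hX, hne] using by omega
    · simp [hX, hne]
  have hmem : e ∈ edgesIn edge X := by
    simp [edgesIn, hsub]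
  have := hm.2 X hXne
  have hle : m e ≤ ∑ e' ∈ edgesIn edge X, m e' := Finset.single_le_sum (fun _ _ => Nat.zero_le _) hmem
  omega

lemma hcut_bot (edge : E → Finset V) :
    hcut edge (⊥ : Finpartition (univ : Finset V)) =
      univ.filter (fun e => 2 ≤ (edge e).card) := by
  ext e
  simp only [hcut, Finset.mem_filter, Finset.mem_univ, true_and]
  constructor
  · rintro ⟨p, hp, q, hq, hne, hpe, hqe⟩
    obtain ⟨a, -, rfl⟩ := Finpartition.mem_bot_iff.1 hp
    obtain ⟨b, -, rfl⟩ := Finpartition.mem_bot_iff.1 hq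
    have ha : a ∈ edge e := by
      obtain ⟨x, hx⟩ := hpe
      simp only [Finset.mem_inter, Finset.mem_singleton] at hx
      rcases hx with ⟨hx1, rfl⟩; exact hx1
    have hb : b ∈ edge e := by
      obtain ⟨x, hx⟩ := hqe
      simp only [Finset.mem_inter, Finset.mem_singleton] at hx
      rcases hx with ⟨hx1, rfl⟩; exact hx1
    have hab : a ≠ b := fun hh => hne (by rw [hh])
    have : 1 < (edge e).card := Finset.one_lt_card.2 ⟨a, ha, b, hb, hab⟩
    omega
  · intro h
    obtain ⟨a, ha, b, hb, hab⟩ := Finset.one_lt_card.1 (by omega : 1 < (edge e).card)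
    exact ⟨{a}, Finpartition.mem_bot_iff.2 ⟨a, Finset.mem_univ a, rfl⟩,
      {b}, Finpartition.mem_bot_iff.2 ⟨b, Finset.mem_univ b, rfl⟩,
      by simp [hab], ⟨a, by simp [ha]⟩, ⟨b, by simp [hb]⟩⟩

end Aux
section Aux2

variable {V E : Type*} [Fintype V] [DecidableEq V] [Fintype E]

lemma cut_count (edge : E → Finset V) (P : Finpartition (univ : Finset V))
    {m : E → ℕ} (hm : IsMultiTree edge m) :
    P.parts.card - 1 ≤ ∑ e ∈ hcut edge P, m e := by
  by_cases hk : P.parts.card ≤ 1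
  · omega
  push_neg at hk
  have hn2 : 2 ≤ Fintype.card V := le_trans hk (by
    simpa [Finset.card_univ] using P.card_parts_le_card)
  have hVne : Nonempty V := Fintype.card_pos_iff.1 (by omega)
  -- T : non-cut edges with positive multiplicity
  set T : Finset E := (univ \ hcut edge P).filter (fun e => m e ≠ 0) with hT
  -- every edge in T lies inside a part
  have hcontain : ∀ e ∈ T, ∃ p ∈ P.parts, edge e ⊆ p := by
    intro e he
    simp only [hT, Finset.mem_filter, Finset.mem_sdiff, Finset.mem_univ, true_and] at he
    obtain ⟨hnc, hme⟩ := he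
    have h2 : 2 ≤ (edge e).card := multitree_support edge hm hVne hme
    obtain ⟨v, hv⟩ := Finset.card_pos.1 (by omega : 0 < (edge e).card)
    obtain ⟨p, hp, hvp⟩ := P.exists_mem (Finset.mem_univ v)
    refine ⟨p, hp, fun w hw => ?_⟩
    obtain ⟨q, hq, hwq⟩ := P.exists_mem (Finset.mem_univ w)
    by_cases hpq : q = p
    · rwa [hpq] at hwq
    · exfalso
      apply hnc
      simp only [hcut, Finset.mem_filter, Finset.mem_univ, true_and]
      exact ⟨p, hp, q, hq, fun hh => hpq hh.symm, ⟨v, Finset.mem_inter.2 ⟨hv, hvp⟩⟩,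
        ⟨w, Finset.mem_inter.2 ⟨hw, hwq⟩⟩⟩
  -- the sets edgesIn p ∩ T are pairwise disjoint over parts
  have hdisj : ∀ p ∈ P.parts, ∀ q ∈ P.parts, p ≠ q →
      Disjoint (edgesIn edge p ∩ T) (edgesIn edge q ∩ T) := by
    intro p hp q hq hpq
    rw [Finset.disjoint_left]
    intro e hep heq
    simp only [Finset.mem_inter, edgesIn, Finset.mem_filter, Finset.mem_univ, true_and] at hep heq
    have hme : m e ≠ 0 := by
      have := hep.2
      simp only [hT, Finset.mem_filter] at this
      exact this.2
    have h2 : 2 ≤ (edge e).card := multitree_support edge hm hVne hme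
    obtain ⟨v, hv⟩ := Finset.card_pos.1 (by omega : 0 < (edge e).card)
    exact hpq (P.eq_of_mem_parts hp hq (hep.1 hv) (heq.1 hv))
  have hTsub : T ⊆ P.parts.biUnion (fun p => edgesIn edge p ∩ T) := by
    intro e he
    obtain ⟨p, hp, hsub⟩ := hcontain e he
    exact Finset.mem_biUnion.2 ⟨p, hp, Finset.mem_inter.2
      ⟨by simp [edgesIn, hsub], he⟩⟩
  have hTle : ∑ e ∈ T, m e ≤ ∑ p ∈ P.parts, ∑ e ∈ edgesIn edge p, m e := by
    calc ∑ e ∈ T, m e ≤ ∑ e ∈ P.parts.biUnion (fun p => edgesIn edge p ∩ T), m e :=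
          Finset.sum_le_sum_of_subset hTsub
      _ = ∑ p ∈ P.parts, ∑ e ∈ edgesIn edge p ∩ T, m e := Finset.sum_biUnion hdisj
      _ ≤ ∑ p ∈ P.parts, ∑ e ∈ edgesIn edge p, m e :=
          Finset.sum_le_sum fun p _ => Finset.sum_le_sum_of_subset (Finset.inter_subset_left)
  have hparts : ∑ p ∈ P.parts, ∑ e ∈ edgesIn edge p, m e ≤
      ∑ p ∈ P.parts, (p.card - 1) :=
    Finset.sum_le_sum fun p hp => hm.2 p (P.nonempty_of_mem_parts hp)
  have hpartsum : ∑ p ∈ P.parts, (p.card - 1) + P.parts.card = Fintype.card V := by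
    have h1 : ∑ p ∈ P.parts, (p.card - 1) + P.parts.card = ∑ p ∈ P.parts, ((p.card - 1) + 1) := by
      rw [Finset.sum_add_distrib, Finset.sum_const, smul_eq_mul, mul_one]
    rw [h1]
    have h2 : ∀ p ∈ P.parts, (p.card - 1) + 1 = p.card := fun p hp => by
      have := Finset.card_pos.2 (P.nonempty_of_mem_parts hp)
      omega
    rw [Finset.sum_congr rfl h2]
    simpa [Finset.card_univ] using P.sum_card_parts
  -- split the total sum
  have hsplit : ∑ e ∈ hcut edge P, m e + ∑ e ∈ univ \ hcut edge P, m e = Fintype.card V - 1 := by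
    rw [← Finset.compl_eq_univ_sdiff, Finset.sum_add_sum_compl (hcut edge P) m]
    exact hm.1
  have hTeq : ∑ e ∈ univ \ hcut edge P, m e = ∑ e ∈ T, m e := by
    rw [hT]
    exact (Finset.sum_filter_ne_zero _).symm
  omega

end Aux2
section Aux3

variable {V E : Type*} [Fintype V] [DecidableEq V] [Fintype E]

lemma adm_of_partition (edge : E → Finset V) (σ : E → ℝ) (P : Finpartition (univ : Finset V))
    (h2 : 2 ≤ P.parts.card) :
    ∃ ρ ∈ AdmSet (OmegaSet edge),
      ∑ e, σ e * ρ e = (∑ e ∈ hcut edge P, σ e) / ((P.parts.card : ℝ) - 1) := by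
  set k := P.parts.card with hkdef
  have hk1 : (0 : ℝ) < (k : ℝ) - 1 := by
    have : (2 : ℝ) ≤ (k : ℝ) := by exact_mod_cast h2
    linarith
  set c : ℝ := ((k : ℝ) - 1)⁻¹ with hc
  have hc0 : 0 ≤ c := le_of_lt (inv_pos.2 hk1)
  refine ⟨fun e => if e ∈ hcut edge P then c else 0, ⟨fun e => ?_, fun x hx => ?_⟩, ?_⟩
  · dsimp only; split <;> simp [hc0]
  · obtain ⟨m, hm, rfl⟩ := hx
    have hcount : (k : ℝ) - 1 ≤ ∑ e ∈ hcut edge P, (m e : ℝ) := by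
      have h := cut_count edge P hm
      have : ((k - 1 : ℕ) : ℝ) ≤ ((∑ e ∈ hcut edge P, m e : ℕ) : ℝ) := by exact_mod_cast h
      rw [Nat.cast_sum] at this
      have hk' : ((k - 1 : ℕ) : ℝ) = (k : ℝ) - 1 := by
        have : 1 ≤ k := by omega
        push_cast [this]; ring
      linarith [hk' ▸ this]
    have hsum : ∑ e, (m e : ℝ) * (if e ∈ hcut edge P then c else 0)
        = (∑ e ∈ hcut edge P, (m e : ℝ)) * c := by
      rw [Finset.sum_mul]
      simp only [mul_ite, mul_zero]
      rw [Finset.sum_ite_mem, Finset.univ_inter]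
    rw [hsum]
    calc (1 : ℝ) = ((k : ℝ) - 1) * c := (mul_inv_cancel₀ hk1.ne').symm
      _ ≤ (∑ e ∈ hcut edge P, (m e : ℝ)) * c := mul_le_mul_of_nonneg_right hcount hc0
  · have hsum : ∑ e, σ e * (if e ∈ hcut edge P then c else 0)
        = (∑ e ∈ hcut edge P, σ e) * c := by
      rw [Finset.sum_mul]
      simp only [mul_ite, mul_zero]
      rw [Finset.sum_ite_mem, Finset.univ_inter]
    rw [hsum, div_eq_mul_inv]

lemma strengthW_nonneg (edge : E → Finset V) (σ : E → ℝ) (hσ : ∀ e, 0 < σ e) :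
    0 ≤ strengthW σ edge := by
  apply Real.sInf_nonneg
  rintro r ⟨P, h2, rfl⟩
  have hk1 : (0 : ℝ) < (P.parts.card : ℝ) - 1 := by
    have : (2 : ℝ) ≤ (P.parts.card : ℝ) := by exact_mod_cast h2
    linarith
  exact div_nonneg (Finset.sum_nonneg fun e _ => (hσ e).le) hk1.le

lemma strengthW_le (edge : E → Finset V) (σ : E → ℝ) (hσ : ∀ e, 0 < σ e)
    (P : Finpartition (univ : Finset V)) (h2 : 2 ≤ P.parts.card) :
    strengthW σ edge ≤ (∑ e ∈ hcut edge P, σ e) / ((P.parts.card : ℝ) - 1) := by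
  apply csInf_le
  · refine ⟨0, ?_⟩
    rintro r ⟨Q, hQ2, rfl⟩
    refine div_nonneg (Finset.sum_nonneg fun e _ => (hσ e).le) ?_
    have : (2 : ℝ) ≤ (Q.parts.card : ℝ) := by exact_mod_cast hQ2
    linarith
  · exact ⟨P, h2, rfl⟩

end Aux3
noncomputable section Contract

variable {V E : Type*} [Fintype V] [DecidableEq V] [Fintype E]

/-- Vertex set after contracting `B` to `v₀`. -/
def cvset (B : Finset V) (v₀ : V) : Finset V := (univ \ B) ∪ {v₀}

/-- Contraction map. -/
def cmap (B : Finset V) (v₀ : V) (v : V) : {x // x ∈ cvset B v₀} :=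
  if h : v ∈ B then ⟨v₀, by simp [cvset]⟩ else ⟨v, by simp [cvset, h]⟩

/-- Contracted hyperedges. -/
def cedge (edge : E → Finset V) (B : Finset V) (v₀ : V) (e : E) :
    Finset {x // x ∈ cvset B v₀} := (edge e).image (cmap B v₀)

variable {B : Finset V} {v₀ : V}

lemma cmap_mem_B (hv : v₀ ∈ B) {v : V} (h : v ∈ B) : cmap B v₀ v = ⟨v₀, by simp [cvset]⟩ := by
  simp [cmap, h]

lemma cmap_not_mem_B {v : V} (h : v ∉ B) : cmap B v₀ v = ⟨v, by simp [cvset, h]⟩ := by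
  simp [cmap, h]

lemma cmap_fix (hv : v₀ ∈ B) (x : {x // x ∈ cvset B v₀}) : cmap B v₀ x.1 = x := by
  have hx := x.2
  simp only [cvset, Finset.mem_union, Finset.mem_sdiff, Finset.mem_univ, true_and,
    Finset.mem_singleton] at hx
  rcases hx with h | h
  · rw [cmap_not_mem_B h]
  · by_cases hB : x.1 ∈ B
    · rw [cmap_mem_B hv hB]; exact Subtype.ext h.symm
    · rw [cmap_not_mem_B hB]

lemma cmap_card (hv : v₀ ∈ B) :
    Fintype.card {x // x ∈ cvset B v₀} = Fintype.card V - B.card + 1 := by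
  rw [Fintype.card_coe, cvset, Finset.card_union_of_disjoint, Finset.card_sdiff_of_subset
    (Finset.subset_univ B), Finset.card_singleton, Finset.card_univ]
  · rw [Finset.disjoint_singleton_right]
    simp [hv]

lemma contract_conn {edge : E → Finset V} (hconn : HConnected edge) (hv : v₀ ∈ B) :
    HConnected (cedge edge B v₀) := by
  intro X' hX'sub hX'ne hX'neq
  set X : Finset V := univ.filter (fun v => cmap B v₀ v ∈ X') with hX
  have hmemX : ∀ v : V, v ∈ X ↔ cmap B v₀ v ∈ X' := fun v => by simp [hX]
  have hXne : X.Nonempty := by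
    obtain ⟨x, hx⟩ := hX'ne
    exact ⟨x.1, (hmemX x.1).2 (by rw [cmap_fix hv]; exact hx)⟩
  have hXneq : X ≠ univ := by
    intro hcon
    apply hX'neq
    apply Finset.eq_univ_of_forall
    intro x
    have : x.1 ∈ X := hcon ▸ Finset.mem_univ x.1
    rw [hmemX, cmap_fix hv] at this
    exact this
  obtain ⟨e, -, ⟨v, hv1⟩, ⟨w, hw1⟩⟩ := hconn X (Finset.subset_univ X) hXne hXneq
  simp only [Finset.mem_inter] at hv1
  simp only [Finset.mem_sdiff, Finset.mem_inter] at hw1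
  refine ⟨e, Finset.subset_univ _, ⟨cmap B v₀ v, ?_⟩, ⟨cmap B v₀ w, ?_⟩⟩
  · simp only [Finset.mem_inter]
    exact ⟨Finset.mem_image_of_mem _ hv1.1, (hmemX v).1 hv1.2⟩
  · simp only [Finset.mem_sdiff, Finset.mem_inter]
    refine ⟨⟨Finset.mem_image_of_mem _ hw1.1.1, Finset.mem_univ _⟩, ?_⟩
    intro hcon
    exact hw1.2 ((hmemX w).2 hcon)

lemma contract_strength (edge : E → Finset V) (σ : E → ℝ) (hσ : ∀ e, 0 < σ e) (hv : v₀ ∈ B)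
    (h2 : 2 ≤ Fintype.card {x // x ∈ cvset B v₀}) :
    strengthW σ edge ≤ strengthW σ (cedge edge B v₀) := by
  apply le_csInf
  · refine ⟨_, ⟨(⊥ : Finpartition (univ : Finset {x // x ∈ cvset B v₀})), ?_, rfl⟩⟩
    rw [Finpartition.card_bot, Finset.card_univ]
    exact h2
  · rintro r ⟨P', hP'2, rfl⟩
    set pre : Finset {x // x ∈ cvset B v₀} → Finset V :=
      fun p' => univ.filter (fun v => cmap B v₀ v ∈ p') with hpre
    have hmempre : ∀ (p' : Finset {x // x ∈ cvset B v₀}) (v : V),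
        v ∈ pre p' ↔ cmap B v₀ v ∈ p' := fun p' v => by simp [hpre]
    have hpreinj : Function.Injective pre := by
      intro p' q' h
      ext x
      constructor <;> intro hx
      · have : x.1 ∈ pre p' := (hmempre p' x.1).2 (by rwa [cmap_fix hv])
        rw [h, hmempre, cmap_fix hv] at this
        exact this
      · have : x.1 ∈ pre q' := (hmempre q' x.1).2 (by rwa [cmap_fix hv])
        rw [← h, hmempre, cmap_fix hv] at this
        exact this
    set P : Finpartition (univ : Finset V) :=
      { parts := P'.parts.image pre
        supIndep := by
          rw [Finset.supIndep_iff_pairwiseDisjoint]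
          rintro p hp q hq hpq
          simp only [Function.onFun, id]
          simp only [Finset.coe_image, Set.mem_image, Finset.mem_coe] at hp hq
          obtain ⟨p', hp', rfl⟩ := hp
          obtain ⟨q', hq', rfl⟩ := hq
          have hpq' : p' ≠ q' := fun h => hpq (by rw [h])
          rw [Finset.disjoint_left]
          intro v hv1 hv2
          rw [hmempre] at hv1 hv2
          exact hpq' (P'.eq_of_mem_parts hp' hq' hv1 hv2)
        sup_parts := by
          apply le_antisymm
          · exact Finset.sup_le fun p _ => Finset.subset_univ p
          · intro v _
            obtain ⟨p', hp', hvp'⟩ := P'.exists_mem (Finset.mem_univ (cmap B v₀ v))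
            rw [Finset.mem_sup]
            exact ⟨pre p', Finset.mem_image_of_mem pre hp', (hmempre p' v).2 hvp'⟩
        bot_notMem := by
          intro hcon
          simp only [Finset.bot_eq_empty, Finset.mem_image] at hcon
          obtain ⟨p', hp', hp'e⟩ := hcon
          obtain ⟨x, hx⟩ := P'.nonempty_of_mem_parts hp'
          have : x.1 ∈ pre p' := (hmempre p' x.1).2 (by rwa [cmap_fix hv])
          rw [hp'e] at this
          exact absurd this (Finset.notMem_empty _) } with hP
    have hcard : P.parts.card = P'.parts.card := by
      rw [hP]
      exact Finset.card_image_of_injective _ hpreinj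
    have hcuteq : hcut edge P = hcut (cedge edge B v₀) P' := by
      ext e
      simp only [hcut, Finset.mem_filter, Finset.mem_univ, true_and]
      constructor
      · rintro ⟨p, hp, q, hq, hpq, ⟨v, hv1⟩, ⟨w, hw1⟩⟩
        simp only [hP, Finset.mem_image] at hp hq
        obtain ⟨p', hp', rfl⟩ := hp
        obtain ⟨q', hq', rfl⟩ := hq
        rw [Finset.mem_inter] at hv1 hw1
        refine ⟨p', hp', q', hq', fun h => hpq (by rw [h]), ?_, ?_⟩
        · exact ⟨cmap B v₀ v, Finset.mem_inter.2
            ⟨Finset.mem_image_of_mem _ hv1.1, (hmempre p' v).1 hv1.2⟩⟩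
        · exact ⟨cmap B v₀ w, Finset.mem_inter.2
            ⟨Finset.mem_image_of_mem _ hw1.1, (hmempre q' w).1 hw1.2⟩⟩
      · rintro ⟨p', hp', q', hq', hpq', ⟨x, hx1⟩, ⟨y, hy1⟩⟩
        rw [Finset.mem_inter] at hx1 hy1
        obtain ⟨v, hv1, rfl⟩ := Finset.mem_image.1 hx1.1
        obtain ⟨w, hw1, rfl⟩ := Finset.mem_image.1 hy1.1
        refine ⟨pre p', Finset.mem_image_of_mem pre hp',
          pre q', Finset.mem_image_of_mem pre hq',
          fun h => hpq' (hpreinj h), ?_, ?_⟩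
        · exact ⟨v, Finset.mem_inter.2 ⟨hv1, (hmempre p' v).2 hx1.2⟩⟩
        · exact ⟨w, Finset.mem_inter.2 ⟨hw1, (hmempre q' w).2 hy1.2⟩⟩
    calc strengthW σ edge ≤ (∑ e ∈ hcut edge P, σ e) / ((P.parts.card : ℝ) - 1) :=
          strengthW_le edge σ hσ P (by rw [hcard]; exact hP'2)
      _ = (∑ e ∈ hcut (cedge edge B v₀) P', σ e) / ((P'.parts.card : ℝ) - 1) := by
          rw [hcuteq, hcard]

end Contract
noncomputable section Lift

variable {V E : Type*} [Fintype V] [DecidableEq V] [Fintype E]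
variable {B : Finset V} {v₀ : V}

lemma cimage_card_of_subset (hv : v₀ ∈ B) {X : Finset V} (hBX : B ⊆ X) :
    (X.image (cmap B v₀)).card = X.card - B.card + 1 := by
  have hXsplit : X = (X \ B) ∪ B := by
    rw [Finset.sdiff_union_self_eq_union, Finset.union_eq_left.2 hBX]
  have himg : X.image (cmap B v₀) = (X \ B).image (cmap B v₀) ∪ B.image (cmap B v₀) := by
    conv_lhs => rw [hXsplit]
    exact Finset.image_union _ _
  have hBimg : B.image (cmap B v₀) = {⟨v₀, by simp [cvset]⟩} := by
    apply Finset.eq_singleton_iff_unique_mem.2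
    constructor
    · exact Finset.mem_image.2 ⟨v₀, hv, cmap_mem_B hv hv⟩
    · intro x hx
      obtain ⟨u, hu, rfl⟩ := Finset.mem_image.1 hx
      rw [cmap_mem_B hv hu]
  have hdisj : Disjoint ((X \ B).image (cmap B v₀)) (B.image (cmap B v₀)) := by
    rw [hBimg, Finset.disjoint_singleton_right]
    intro hcon
    obtain ⟨u, hu, hequ⟩ := Finset.mem_image.1 hcon
    rw [Finset.mem_sdiff] at hu
    rw [cmap_not_mem_B hu.2] at hequ
    have : u = v₀ := congrArg Subtype.val hequ
    exact hu.2 (this ▸ hv)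
  have hinj : Set.InjOn (cmap B v₀) (X \ B : Finset V) := by
    intro u hu w hw h
    simp only [Finset.coe_sdiff, Set.mem_diff, Finset.mem_coe] at hu hw
    rw [cmap_not_mem_B hu.2, cmap_not_mem_B hw.2] at h
    exact congrArg Subtype.val h
  rw [himg, Finset.card_union_of_disjoint hdisj, Finset.card_image_of_injOn hinj, hBimg,
    Finset.card_singleton, Finset.card_sdiff_of_subset hBX]

lemma lift_multitree {edge : E → Finset V} {e₀ : E} (hB : edge e₀ = B) (h2B : 2 ≤ B.card)
    (hv : v₀ ∈ B) {m' : E → ℕ} (hm' : IsMultiTree (cedge edge B v₀) m') :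
    IsMultiTree edge (fun e => m' e + (if e = e₀ then B.card - 1 else 0)) := by
  have hcardV' : Fintype.card {x // x ∈ cvset B v₀} = Fintype.card V - B.card + 1 :=
    cmap_card hv
  have hBle : B.card ≤ Fintype.card V := by
    rw [← Finset.card_univ]; exact Finset.card_le_card (Finset.subset_univ B)
  constructor
  · rw [Finset.sum_add_distrib, hm'.1, Finset.sum_ite_eq' univ e₀ (fun _ => B.card - 1),
      if_pos (Finset.mem_univ e₀), hcardV']
    omega
  · intro X hXne
    set X' := X.image (cmap B v₀) with hX'
    have hX'ne : X'.Nonempty := hXne.image _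
    have hsub : edgesIn edge X ⊆ edgesIn (cedge edge B v₀) X' := by
      intro e he
      simp only [edgesIn, Finset.mem_filter, Finset.mem_univ, true_and] at he ⊢
      exact Finset.image_subset_image he
    have hsum' : ∑ e ∈ edgesIn edge X, m' e ≤ X'.card - 1 :=
      le_trans (Finset.sum_le_sum_of_subset hsub) (hm'.2 X' hX'ne)
    rw [Finset.sum_add_distrib]
    rw [Finset.sum_ite_eq' (edgesIn edge X) e₀ (fun _ => B.card - 1)]
    by_cases he₀ : e₀ ∈ edgesIn edge X
    · rw [if_pos he₀]
      have hBX : B ⊆ X := by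
        simp only [edgesIn, Finset.mem_filter] at he₀
        rw [← hB]; exact he₀.2
      have hX'card : X'.card = X.card - B.card + 1 := cimage_card_of_subset hv hBX
      have hXcard : B.card ≤ X.card := Finset.card_le_card hBX
      omega
    · rw [if_neg he₀, add_zero]
      have hX'le : X'.card ≤ X.card := Finset.card_image_le
      have : 0 < X.card := Finset.card_pos.2 hXne
      omega

end Lift
lemma key_lemma : ∀ (n : ℕ) {V E : Type*} [Fintype V] [DecidableEq V] [Fintype E]
    (edge : E → Finset V), Fintype.card V ≤ n → HConnected edge →
    ∀ (σ ρ : E → ℝ), (∀ e, 0 < σ e) → (∀ e, 0 ≤ ρ e) →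
    ∃ m : E → ℕ, IsMultiTree edge m ∧
      strengthW σ edge * (∑ e, (m e : ℝ) * ρ e) ≤ ∑ e, σ e * ρ e := by
  intro n
  induction n with
  | zero =>
    intro V E _ _ _ edge hcard _ σ ρ hσ hρ
    refine ⟨fun _ => 0, multitree_zero edge (by omega), ?_⟩
    simp only [Nat.cast_zero, zero_mul, Finset.sum_const_zero, mul_zero]
    exact Finset.sum_nonneg fun e _ => mul_nonneg (hσ e).le (hρ e)
  | succ n IH =>
    intro V E _ _ _ edge hcard hconn σ ρ hσ hρ
    by_cases hV1 : Fintype.card V ≤ 1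
    · refine ⟨fun _ => 0, multitree_zero edge hV1, ?_⟩
      simp only [Nat.cast_zero, zero_mul, Finset.sum_const_zero, mul_zero]
      exact Finset.sum_nonneg fun e _ => mul_nonneg (hσ e).le (hρ e)
    push_neg at hV1
    have hV2 : 2 ≤ Fintype.card V := hV1
    have hVne : Nonempty V := Fintype.card_pos_iff.1 (by omega)
    set D : Finset E := univ.filter (fun e => 2 ≤ (edge e).card) with hD
    have hmemD : ∀ e, e ∈ D ↔ 2 ≤ (edge e).card := fun e => by simp [hD]
    -- D is nonempty
    have hDne : D.Nonempty := by
      obtain ⟨v⟩ := hVne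
      have hXne : ({v} : Finset V).Nonempty := Finset.singleton_nonempty v
      have hXneq : ({v} : Finset V) ≠ univ := by
        intro hcon
        have := Finset.card_univ (α := V) ▸ congrArg Finset.card hcon
        simp only [Finset.card_singleton] at this
        omega
      obtain ⟨e, -, ⟨a, ha⟩, ⟨b, hb⟩⟩ := hconn {v} (Finset.subset_univ _) hXne hXneq
      simp only [Finset.mem_inter, Finset.mem_singleton] at ha
      simp only [Finset.mem_sdiff, Finset.mem_inter, Finset.mem_singleton] at hb
      refine ⟨e, (hmemD e).2 (Finset.one_lt_card.2 ⟨a, ha.1, b, hb.1.1, ?_⟩)⟩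
      intro hcon
      exact hb.2 (hcon ▸ ha.2)
    obtain ⟨e₀, he₀D, hmin⟩ := Finset.exists_min_image D ρ hDne
    set μ := ρ e₀ with hμ
    have hμ0 : 0 ≤ μ := hρ e₀
    set ρ' : E → ℝ := fun e => if 2 ≤ (edge e).card then ρ e - μ else ρ e with hρ'def
    have hρ'0 : ∀ e, 0 ≤ ρ' e := by
      intro e
      simp only [hρ'def]
      split
      · have : e ∈ D := (hmemD e).2 (by assumption)
        have := hmin e this
        linarith
      · exact hρ e
    have hρ'e₀ : ρ' e₀ = 0 := by
      simp only [hρ'def, if_pos ((hmemD e₀).1 he₀D)]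
      ring
    set B := edge e₀ with hBdef
    have h2B : 2 ≤ B.card := (hmemD e₀).1 he₀D
    obtain ⟨v₀, hv₀⟩ := Finset.card_pos.1 (by omega : 0 < B.card)
    have hBle : B.card ≤ Fintype.card V := by
      rw [← Finset.card_univ]; exact Finset.card_le_card (Finset.subset_univ B)
    have hcard' : Fintype.card {x // x ∈ cvset B v₀} ≤ n := by
      rw [cmap_card hv₀]; omega
    obtain ⟨m', hm', hineq'⟩ := IH (cedge edge B v₀) hcard' (contract_conn hconn hv₀) σ ρ' hσ hρ'0
    set m : E → ℕ := fun e => m' e + (if e = e₀ then B.card - 1 else 0) with hmdef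
    have hm : IsMultiTree edge m := lift_multitree rfl h2B hv₀ hm'
    set S := strengthW σ edge with hSdef
    have hS0 : 0 ≤ S := strengthW_nonneg edge σ hσ
    -- support of m is contained in D
    have hsuppm : ∀ e, m e ≠ 0 → e ∈ D := by
      intro e he
      simp only [hmdef] at he
      by_cases he₀ : e = e₀
      · exact he₀ ▸ he₀D
      · rw [if_neg he₀, add_zero] at he
        have h2' : 2 ≤ (cedge edge B v₀ e).card :=
          multitree_support (cedge edge B v₀) hm' ⟨⟨v₀, by simp [cvset]⟩⟩ he
        exact (hmemD e).2 (le_trans h2' Finset.card_image_le)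
    -- splitting sums along ρ = ρ' + μ·1_D
    have hsplitsum : ∀ f : E → ℝ, ∑ e, f e * ρ e = ∑ e, f e * ρ' e + μ * ∑ e ∈ D, f e := by
      intro f
      have hptwise : ∀ e, f e * ρ e = f e * ρ' e + (if e ∈ D then f e * μ else 0) := by
        intro e
        by_cases h2 : 2 ≤ (edge e).card
        · rw [if_pos ((hmemD e).2 h2)]
          simp only [hρ'def, if_pos h2]
          ring
        · rw [if_neg (fun hc => h2 ((hmemD e).1 hc))]
          simp only [hρ'def, if_neg h2]
          ring
      rw [Finset.sum_congr rfl (fun e _ => hptwise e), Finset.sum_add_distrib,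
        Finset.sum_ite_mem, Finset.univ_inter, ← Finset.sum_mul]
      ring
    -- total multiplicity over D
    have hmD : ∑ e ∈ D, (m e : ℝ) = (Fintype.card V : ℝ) - 1 := by
      have h1 : ∑ e ∈ D, m e = ∑ e, m e := by
        apply Finset.sum_subset (Finset.filter_subset _ _)
        intro e _ heD
        by_contra hc
        exact heD (hsuppm e hc)
      have h2 : ((∑ e ∈ D, m e : ℕ) : ℝ) = ((Fintype.card V - 1 : ℕ) : ℝ) := by
        rw [h1, hm.1]
      rw [Nat.cast_sum] at h2
      rw [h2]
      have : 1 ≤ Fintype.card V := by omega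
      push_cast [this]
      ring
    -- m and m' have the same ρ'-cost
    have hmm' : ∑ e, (m e : ℝ) * ρ' e = ∑ e, (m' e : ℝ) * ρ' e := by
      apply Finset.sum_congr rfl
      intro e _
      simp only [hmdef]
      by_cases he₀ : e = e₀
      · subst he₀
        rw [hρ'e₀]
        ring
      · rw [if_neg he₀, add_zero]
    -- σ-weight of D dominates S(n-1)
    have hDσ : S * ((Fintype.card V : ℝ) - 1) ≤ ∑ e ∈ D, σ e := by
      have hb := strengthW_le edge σ hσ (⊥ : Finpartition (univ : Finset V)) (by
        rw [Finpartition.card_bot, Finset.card_univ]; exact hV2)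
      rw [hcut_bot, Finpartition.card_bot, Finset.card_univ] at hb
      rw [← hD] at hb
      have hpos : (0 : ℝ) < (Fintype.card V : ℝ) - 1 := by
        have : (2 : ℝ) ≤ (Fintype.card V : ℝ) := by exact_mod_cast hV2
        linarith
      calc S * ((Fintype.card V : ℝ) - 1)
          ≤ ((∑ e ∈ D, σ e) / ((Fintype.card V : ℝ) - 1)) * ((Fintype.card V : ℝ) - 1) :=
            mul_le_mul_of_nonneg_right hb hpos.le
        _ = ∑ e ∈ D, σ e := div_mul_cancel₀ _ hpos.ne'
    -- relate S to the strength of the contraction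
    have hstep : S * (∑ e, (m' e : ℝ) * ρ' e) ≤ ∑ e, σ e * ρ' e := by
      by_cases hV'2 : 2 ≤ Fintype.card {x // x ∈ cvset B v₀}
      · have hSS' : S ≤ strengthW σ (cedge edge B v₀) :=
          contract_strength edge σ hσ hv₀ hV'2
        have hnn : 0 ≤ ∑ e, (m' e : ℝ) * ρ' e :=
          Finset.sum_nonneg fun e _ => mul_nonneg (Nat.cast_nonneg _) (hρ'0 e)
        calc S * (∑ e, (m' e : ℝ) * ρ' e)
            ≤ strengthW σ (cedge edge B v₀) * (∑ e, (m' e : ℝ) * ρ' e) :=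
              mul_le_mul_of_nonneg_right hSS' hnn
          _ ≤ ∑ e, σ e * ρ' e := hineq'
      · have hV'1 : Fintype.card {x // x ∈ cvset B v₀} ≤ 1 := by omega
        have hz : ∀ e, m' e = 0 := by
          intro e
          have h1 := hm'.1
          have : Fintype.card {x // x ∈ cvset B v₀} - 1 = 0 := by omega
          rw [this] at h1
          have := Finset.sum_eq_zero_iff.1 h1
          exact this e (Finset.mem_univ e)
        have : ∑ e, (m' e : ℝ) * ρ' e = 0 := by
          apply Finset.sum_eq_zero
          intro e _
          rw [hz e]
          simp
        rw [this, mul_zero]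
        exact Finset.sum_nonneg fun e _ => mul_nonneg (hσ e).le (hρ'0 e)
    -- put everything together
    refine ⟨m, hm, ?_⟩
    rw [hsplitsum (fun e => (m e : ℝ)), hsplitsum σ, hmD, hmm']
    have h1 : S * (∑ e, (m' e : ℝ) * ρ' e) + μ * (S * ((Fintype.card V : ℝ) - 1)) ≤
        (∑ e, σ e * ρ' e) + μ * (∑ e ∈ D, σ e) :=
      add_le_add hstep (mul_le_mul_of_nonneg_left hDσ hμ0)
    calc S * ((∑ e, (m' e : ℝ) * ρ' e) + μ * ((Fintype.card V : ℝ) - 1))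
        = S * (∑ e, (m' e : ℝ) * ρ' e) + μ * (S * ((Fintype.card V : ℝ) - 1)) := by ring
      _ ≤ (∑ e, σ e * ρ' e) + μ * (∑ e ∈ D, σ e) := h1
/-- For a connected hypergraph and positive weights `σ`,
`Mod_{1,σ}(Ω(H)) = S_σ(H)`. -/
theorem stmt9 {V E : Type*} [Fintype V] [DecidableEq V] [Fintype E] [DecidableEq E]
    (edge : E → Finset V) (hconn : HConnected edge)
    (σ : E → ℝ) (hσ : ∀ e, 0 < σ e) :
    Mod1 σ (OmegaSet edge) = strengthW σ edge := by
  by_cases hV1 : Fintype.card V ≤ 1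
  · -- degenerate case: both sides are `sInf ∅ = 0`
    have hzero : (fun _ : E => (0 : ℝ)) ∈ OmegaSet edge :=
      ⟨fun _ => 0, multitree_zero edge hV1, by norm_num⟩
    have hAdm : AdmSet (OmegaSet edge) = ∅ := by
      ext ρ
      simp only [Set.mem_empty_iff_false, iff_false]
      rintro ⟨hρ0, hρ1⟩
      have := hρ1 _ hzero
      simp only [zero_mul, Finset.sum_const_zero] at this
      linarith
    have h1 : { t : ℝ | ∃ ρ ∈ AdmSet (OmegaSet edge), t = ∑ e, σ e * ρ e } = ∅ := by
      rw [hAdm]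
      simp
    have h2 : { r : ℝ | ∃ P : Finpartition (univ : Finset V), 2 ≤ P.parts.card ∧
        r = (∑ e ∈ hcut edge P, σ e) / ((P.parts.card : ℝ) - 1) } = ∅ := by
      ext r
      simp only [Set.mem_empty_iff_false, iff_false, Set.mem_setOf_eq]
      rintro ⟨P, hP2, -⟩
      have := P.card_parts_le_card
      rw [Finset.card_univ] at this
      omega
    rw [Mod1, strengthW, h1, h2]
  · push_neg at hV1
    have hV2 : 2 ≤ Fintype.card V := hV1
    have hbot2 : 2 ≤ (⊥ : Finpartition (univ : Finset V)).parts.card := by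
      rw [Finpartition.card_bot, Finset.card_univ]; exact hV2
    apply le_antisymm
    · -- Mod1 ≤ strengthW
      apply csInf_le_csInf
      · refine ⟨0, ?_⟩
        rintro t ⟨ρ, ⟨hρ0, -⟩, rfl⟩
        exact Finset.sum_nonneg fun e _ => mul_nonneg (hσ e).le (hρ0 e)
      · exact ⟨_, ⟨(⊥ : Finpartition (univ : Finset V)), hbot2, rfl⟩⟩
      · rintro r ⟨P, hP2, rfl⟩
        obtain ⟨ρ, hρadm, hval⟩ := adm_of_partition edge σ P hP2
        exact ⟨ρ, hρadm, hval.symm⟩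
    · -- strengthW ≤ Mod1
      apply le_csInf
      · obtain ⟨ρ, hρadm, hval⟩ :=
          adm_of_partition edge σ (⊥ : Finpartition (univ : Finset V)) hbot2
        exact ⟨_, ρ, hρadm, rfl⟩
      · rintro t ⟨ρ, ⟨hρ0, hρ1⟩, rfl⟩
        obtain ⟨m, hm, hkey⟩ := key_lemma (Fintype.card V) edge le_rfl hconn σ ρ hσ hρ0
        have hx : (fun e => (m e : ℝ)) ∈ OmegaSet edge := ⟨m, hm, rfl⟩
        have h1 : 1 ≤ ∑ e, (m e : ℝ) * ρ e := hρ1 _ hx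
        have hS0 := strengthW_nonneg edge σ hσ
        calc strengthW σ edge = strengthW σ edge * 1 := (mul_one _).symm
          _ ≤ strengthW σ edge * (∑ e, (m e : ℝ) * ρ e) :=
              mul_le_mul_of_nonneg_left h1 hS0
          _ ≤ ∑ e, σ e * ρ e := hkey
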